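/- Let d ≥ 1 and let M ∈ M_d(ℂ) be a matrix of the form M = S(A + T), where S is Hermitian and invertible, A is skew-Hermitian, and T is Hermitian positive semidefinite. Assume moreover that M(ker T) ∩ ker T = {0} and ker M ∩ ker T = {0}. Then M has no eigenvalue on the imaginary axis iℝ (in particular M is invertible). -/

import Mathlib

open Matrix
open scoped ComplexOrder

/-- For a Hermitian matrix `H`, the quadratic form `star v ⬝ᵥ H *ᵥ v` is self-conjugate. -/
lemma herm_quad_star {d : ℕ} (H : Matrix (Fin d) (Fin d) ℂ) (hH : H.IsHermitian)
    (v : Fin d → ℂ) : star (star v ⬝ᵥ H *ᵥ v) = star v ⬝ᵥ H *ᵥ v := by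
  conv_lhs => rw [star_dotProduct, star_star]
  rw [star_mulVec, ← dotProduct_mulVec, hH.eq]

lemma herm_quad_im {d : ℕ} (H : Matrix (Fin d) (Fin d) ℂ) (hH : H.IsHermitian)
    (v : Fin d → ℂ) : (star v ⬝ᵥ H *ᵥ v).im = 0 := by
  have h := herm_quad_star H hH v
  rw [Complex.star_def, Complex.conj_eq_iff_im] at h
  exact h

/-- Let `M = S(A + T)` with `S` Hermitian invertible, `A` skew-Hermitian and
`T` Hermitian positive semidefinite, such that `M(ker T) ∩ ker T = {0}` and
`ker M ∩ ker T = {0}`. Then `M` is invertible and has no eigenvalue on the imaginary axis. -/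
theorem stmt_0 (d : ℕ) (hd : 1 ≤ d)
    (S A T M : Matrix (Fin d) (Fin d) ℂ)
    (hS : S.IsHermitian) (hSinv : IsUnit S)
    (hA : Aᴴ = -A) (hT : T.PosSemidef)
    (hM : M = S * (A + T))
    (h1 : Submodule.map M.mulVecLin (LinearMap.ker T.mulVecLin) ⊓ LinearMap.ker T.mulVecLin = ⊥)
    (h2 : LinearMap.ker M.mulVecLin ⊓ LinearMap.ker T.mulVecLin = ⊥) :
    IsUnit M ∧ ∀ μ ∈ spectrum ℂ M, μ.re ≠ 0 := by
  have hSdet : IsUnit S.det := (Matrix.isUnit_iff_isUnit_det S).mp hSinv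
  have hSinvM : S⁻¹ * M = A + T := by
    rw [hM, ← Matrix.mul_assoc, Matrix.nonsing_inv_mul S hSdet, Matrix.one_mul]
  have key : ∀ μ : ℂ, μ.re = 0 → μ ∉ spectrum ℂ M := by
    intro μ hre hμ
    rw [spectrum.mem_iff] at hμ
    have hdet : (algebraMap ℂ (Matrix (Fin d) (Fin d) ℂ) μ - M).det = 0 := by
      by_contra h
      exact hμ ((Matrix.isUnit_iff_isUnit_det _).mpr (isUnit_iff_ne_zero.mpr h))
    obtain ⟨v, hv0, hv⟩ := (Matrix.exists_mulVec_eq_zero_iff).mpr hdet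
    have heig : M *ᵥ v = μ • v := by
      have h' := hv
      rw [Matrix.sub_mulVec, Algebra.algebraMap_eq_smul_one, Matrix.smul_mulVec,
        Matrix.one_mulVec, sub_eq_zero] at h'
      exact h'.symm
    -- quadratic form computation
    have hATv : (A + T) *ᵥ v = μ • (S⁻¹ *ᵥ v) := by
      rw [← hSinvM, ← Matrix.mulVec_mulVec, heig, Matrix.mulVec_smul]
    set a := star v ⬝ᵥ A *ᵥ v with ha
    set t := star v ⬝ᵥ T *ᵥ v with ht
    set w := star v ⬝ᵥ S⁻¹ *ᵥ v with hw
    have hz : a + t = μ * w := by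
      rw [ha, ht, hw, ← dotProduct_add, ← Matrix.add_mulVec, hATv, dotProduct_smul, smul_eq_mul]
    have hare : a.re = 0 := by
      have h : star a = star v ⬝ᵥ Aᴴ *ᵥ v := by
        rw [ha]
        conv_lhs => rw [star_dotProduct, star_star]
        rw [star_mulVec, ← dotProduct_mulVec]
      rw [hA, Matrix.neg_mulVec, dotProduct_neg, ← ha] at h
      have h2 := congrArg Complex.re h
      simp only [Complex.star_def, Complex.conj_re, Complex.neg_re] at h2
      linarith
    have hwim : w.im = 0 := herm_quad_im _ hS.inv v
    have htpos : (0 : ℂ) ≤ t := hT.dotProduct_mulVec_nonneg v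
    rw [Complex.le_def] at htpos
    obtain ⟨htre, htim⟩ := htpos
    simp only [Complex.zero_re, Complex.zero_im] at htre htim
    have hzre := congrArg Complex.re hz
    rw [Complex.add_re, Complex.mul_re, hre, hare, hwim] at hzre
    simp only [zero_add, zero_mul, mul_zero, sub_zero] at hzre
    have ht0 : t = 0 := Complex.ext (by simp [hzre]) (by simp [htim.symm])
    have hTv : T *ᵥ v = 0 := (hT.dotProduct_mulVec_zero_iff v).mp (ht ▸ ht0)
    have hvker : v ∈ LinearMap.ker T.mulVecLin := by
      rw [LinearMap.mem_ker, Matrix.mulVecLin_apply]; exact hTv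
    have hMv : M *ᵥ v ∈ Submodule.map M.mulVecLin (LinearMap.ker T.mulVecLin) ⊓
        LinearMap.ker T.mulVecLin := by
      refine Submodule.mem_inf.mpr ⟨⟨v, hvker, by rw [Matrix.mulVecLin_apply]⟩,
        LinearMap.mem_ker.mpr ?_⟩
      rw [Matrix.mulVecLin_apply, heig, Matrix.mulVec_smul, hTv, smul_zero]
    rw [h1, Submodule.mem_bot] at hMv
    rcases eq_or_ne μ 0 with h0 | h0
    · have hvk : v ∈ LinearMap.ker M.mulVecLin ⊓ LinearMap.ker T.mulVecLin :=
        Submodule.mem_inf.mpr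
        ⟨LinearMap.mem_ker.mpr (by rw [Matrix.mulVecLin_apply, heig, h0, zero_smul]), hvker⟩
      rw [h2, Submodule.mem_bot] at hvk
      exact hv0 hvk
    · have hμv : μ • v = 0 := by rw [← heig]; exact hMv
      rcases smul_eq_zero.mp hμv with h | h
      · exact h0 h
      · exact hv0 h
  refine ⟨?_, fun μ hμ hre => key μ hre hμ⟩
  by_contra h
  exact key 0 rfl ((spectrum.zero_mem_iff ℂ).mpr h)
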